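/- Fix η > 1, set η₁ = (1+η)/2, and fix ρ ∈ [1/2, 1]. There exists a constant c ∈ (0,1) depending only on η with the following property. Let K ≥ 2, t ≥ 3, let T_1, …, T_K be integers with 1 ≤ T_m ≤ t for all m, let μ_1 ≥ μ_2 ≥ … ≥ μ_K be reals with gaps Δ_m = μ_1 − μ_m, and for each m define B_m = max{ e, log t, t log(t) / Σ_{l=1}^K min{ T_m, T_l^ρ T_m^{1−ρ} } } and, given reals x_1, …, x_K, the index γ_m = x_m + sqrt(2 η log(B_m)/T_m). Suppose i, j are indices such that (a) x_j ≥ μ_j − sqrt( 2 η₁ log max(e, log T_j) / T_j ), (b) Δ_i > 0 and x_i ≤ μ_i + Δ_i/2, and (c) T_j ≤ c · min{ T_i, Δ_j^{−2} } (with Δ_j^{−2} = ∞ if Δ_j = 0). Then γ_j > γ_i. -/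

import Mathlib

open MeasureTheory Real

/-- The confidence argument `B_m = max {e, log t, t log t / Σ_l min {T_m, T_l^ρ T_m^{1-ρ}}}`
built from the pull counts `T_1, …, T_K` (arms indexed `1, …, K`) at time `t`. -/
noncomputable def Bconf (K t : ℕ) (ρ : ℝ) (T : ℕ → ℕ) (m : ℕ) : ℝ :=
  max (Real.exp 1) (max (Real.log t)
    (t * Real.log t /
      ∑ l ∈ Finset.Icc 1 K, min ((T m : ℝ)) ((T l : ℝ) ^ ρ * (T m : ℝ) ^ (1 - ρ))))

/-- The index `γ_m = x_m + sqrt (2 η log (B_m) / T_m)` computed from the empirical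
mean `x_m` of arm `m`. -/
noncomputable def gammaIdx (K t : ℕ) (η ρ : ℝ) (T : ℕ → ℕ) (x : ℕ → ℝ) (m : ℕ) : ℝ :=
  x m + Real.sqrt (2 * η * Real.log (Bconf K t ρ T m) / T m)

set_option maxHeartbeats 1000000 in
/-- the deterministic "chasing" lemma.  Fix `η > 1`, `η₁ = (1+η)/2` and
`ρ ∈ [1/2, 1]`.  There is a constant `c ∈ (0,1)` depending only on `η` such that for all
`K ≥ 2`, `t ≥ 3`, pull counts `1 ≤ T_m ≤ t`, sorted means `μ_1 ≥ … ≥ μ_K` with gaps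
`Δ_m = μ_1 - μ_m`, and empirical means `x_1, …, x_K`: if
(a) `x_j ≥ μ_j - sqrt (2 η₁ log (max e (log T_j)) / T_j)`,
(b) `Δ_i > 0` and `x_i ≤ μ_i + Δ_i / 2`, and
(c) `T_j ≤ c · min {T_i, Δ_j⁻²}` (the second constraint being vacuous when `Δ_j = 0`),
then `γ_j > γ_i`. -/
theorem stmt_10 (η η₁ ρ : ℝ) (hη : 1 < η) (hη₁ : η₁ = (1 + η) / 2)
    (hρ0 : 1 / 2 ≤ ρ) (hρ1 : ρ ≤ 1) :
    ∃ c : ℝ, 0 < c ∧ c < 1 ∧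
      ∀ (K t : ℕ) (T : ℕ → ℕ) (μ x : ℕ → ℝ) (i j : ℕ),
        2 ≤ K → 3 ≤ t →
        (∀ m, 1 ≤ m → m ≤ K → 1 ≤ T m ∧ T m ≤ t) →
        (∀ m m', 1 ≤ m → m ≤ m' → m' ≤ K → μ m' ≤ μ m) →
        1 ≤ i → i ≤ K → 1 ≤ j → j ≤ K →
        μ j - Real.sqrt (2 * η₁ * Real.log (max (Real.exp 1) (Real.log (T j))) / T j)
          ≤ x j →
        0 < μ 1 - μ i →
        x i ≤ μ i + (μ 1 - μ i) / 2 →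
        (T j : ℝ) ≤ c * T i →
        (μ 1 - μ j ≠ 0 → (T j : ℝ) ≤ c * ((μ 1 - μ j) ^ 2)⁻¹) →
        gammaIdx K t η ρ T x i < gammaIdx K t η ρ T x j := by

  have hηpos : (0:ℝ) < η := by linarith
  have hη₁lt : η₁ < η := by rw [hη₁]; linarith
  have hη₁pos : 0 < η₁ := by rw [hη₁]; linarith
  have hr1 : Real.sqrt (η₁ / η) < 1 := by
    rw [show (1:ℝ) = Real.sqrt 1 from Real.sqrt_one.symm]
    exact Real.sqrt_lt_sqrt (by positivity) (by rw [div_lt_one hηpos]; exact hη₁lt)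
  set s : ℝ := 1 - Real.sqrt (η₁ / η) with hs_def
  have hs0 : 0 < s := by simp only [hs_def]; linarith
  refine ⟨min (1/2) (s^2/4), by positivity, lt_of_le_of_lt (min_le_left _ _) (by norm_num), ?_⟩
  set c : ℝ := min (1/2) (s^2/4) with hc_def
  have hc0 : 0 < c := by positivity
  have hc1 : c ≤ 1 := le_trans (min_le_left _ _) (by norm_num)
  have hcs : Real.sqrt c ≤ s / 2 := by
    calc Real.sqrt c ≤ Real.sqrt (s^2/4) := Real.sqrt_le_sqrt (min_le_right _ _)
      _ = s / 2 := by
          rw [show s^2/4 = (s/2)^2 by ring, Real.sqrt_sq (by linarith)]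
  intro K t T μ x i j hK ht hTb hμ hi1 hiK hj1 hjK hxj hΔi hxi hTc hTcΔ
  obtain ⟨hTi1, hTit⟩ := hTb i hi1 hiK
  obtain ⟨hTj1, hTjt⟩ := hTb j hj1 hjK
  have hTi1' : (1:ℝ) ≤ T i := by exact_mod_cast hTi1
  have hTj1' : (1:ℝ) ≤ T j := by exact_mod_cast hTj1
  have hTjt' : (T j:ℝ) ≤ t := by exact_mod_cast hTjt
  have hTi0 : (0:ℝ) < T i := by linarith
  have hTj0 : (0:ℝ) < T j := by linarith
  have ht1 : (1:ℝ) ≤ t := by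
    have : (3:ℝ) ≤ t := by exact_mod_cast ht
    linarith
  have hTji : (T j:ℝ) ≤ T i := by
    calc (T j:ℝ) ≤ c * T i := hTc
      _ ≤ 1 * T i := mul_le_mul_of_nonneg_right hc1 hTi0.le
      _ = T i := one_mul _
  -- sum monotonicity
  have hSmono : (∑ l ∈ Finset.Icc 1 K, min ((T j:ℝ)) ((T l:ℝ)^ρ * (T j:ℝ)^(1-ρ)))
      ≤ ∑ l ∈ Finset.Icc 1 K, min ((T i:ℝ)) ((T l:ℝ)^ρ * (T i:ℝ)^(1-ρ)) := by
    apply Finset.sum_le_sum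
    intro l _
    refine min_le_min hTji ?_
    refine mul_le_mul_of_nonneg_left ?_ (Real.rpow_nonneg (by positivity) ρ)
    exact Real.rpow_le_rpow (by positivity) hTji (by linarith)
  have hSjpos : 0 < ∑ l ∈ Finset.Icc 1 K, min ((T j:ℝ)) ((T l:ℝ)^ρ * (T j:ℝ)^(1-ρ)) := by
    apply Finset.sum_pos
    · intro l hl
      obtain ⟨hl1, hlK⟩ := Finset.mem_Icc.mp hl
      have hTl1 : (1:ℝ) ≤ T l := by exact_mod_cast (hTb l hl1 hlK).1
      have h1 : (1:ℝ) ≤ (T l:ℝ)^ρ := by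
        calc (1:ℝ) = (1:ℝ) ^ ρ := (Real.one_rpow ρ).symm
          _ ≤ (T l:ℝ)^ρ := Real.rpow_le_rpow zero_le_one hTl1 (by linarith)
      have h2 : (1:ℝ) ≤ (T j:ℝ)^(1-ρ) := by
        calc (1:ℝ) = (1:ℝ) ^ (1-ρ) := (Real.one_rpow _).symm
          _ ≤ (T j:ℝ)^(1-ρ) := Real.rpow_le_rpow zero_le_one hTj1' (by linarith)
      exact lt_min (by linarith)
        (mul_pos (Real.rpow_pos_of_pos (by linarith) _) (Real.rpow_pos_of_pos (by linarith) _))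
    · exact ⟨1, Finset.mem_Icc.mpr ⟨le_refl 1, by omega⟩⟩
  have hB : Bconf K t ρ T i ≤ Bconf K t ρ T j := by
    unfold Bconf
    refine max_le_max le_rfl (max_le_max le_rfl ?_)
    apply div_le_div_of_nonneg_left ?_ hSjpos hSmono
    have : (0:ℝ) ≤ Real.log t := Real.log_nonneg ht1
    positivity
  have hBj_e : Real.exp 1 ≤ Bconf K t ρ T j := le_max_left _ _
  have hBi_e : Real.exp 1 ≤ Bconf K t ρ T i := le_max_left _ _
  have hBi_pos : 0 < Bconf K t ρ T i := lt_of_lt_of_le (Real.exp_pos 1) hBi_e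
  have hBj_pos : 0 < Bconf K t ρ T j := lt_of_lt_of_le (Real.exp_pos 1) hBj_e
  have hLi1 : 1 ≤ Real.log (Bconf K t ρ T i) := (Real.le_log_iff_exp_le hBi_pos).2 hBi_e
  have hLj1 : 1 ≤ Real.log (Bconf K t ρ T j) := (Real.le_log_iff_exp_le hBj_pos).2 hBj_e
  have hLij : Real.log (Bconf K t ρ T i) ≤ Real.log (Bconf K t ρ T j) :=
    Real.log_le_log hBi_pos hB
  have hMle : max (Real.exp 1) (Real.log (T j)) ≤ Bconf K t ρ T j := by
    refine max_le hBj_e ?_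
    calc Real.log (T j) ≤ Real.log t := Real.log_le_log hTj0 hTjt'
      _ ≤ Bconf K t ρ T j := le_trans (le_max_left _ _) (le_max_right _ _)
  have hMpos : 0 < max (Real.exp 1) (Real.log (T j)) :=
    lt_of_lt_of_le (Real.exp_pos 1) (le_max_left _ _)
  have hMjLj : Real.log (max (Real.exp 1) (Real.log (T j))) ≤ Real.log (Bconf K t ρ T j) :=
    Real.log_le_log hMpos hMle
  -- abbreviations
  set Li := Real.log (Bconf K t ρ T i) with hLi_def
  set Lj := Real.log (Bconf K t ρ T j) with hLj_def
  set Mj := Real.log (max (Real.exp 1) (Real.log (T j))) with hMj_def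
  have hMj1 : 1 ≤ Mj := (Real.le_log_iff_exp_le hMpos).2 (le_max_left _ _)
  clear_value Li Lj Mj
  have hLi0 : (0:ℝ) ≤ Li := by linarith
  have hLj0 : (0:ℝ) ≤ Lj := by linarith
  have hMj0 : (0:ℝ) ≤ Mj := by linarith
  set A := Real.sqrt (2 * η * Lj / (T j:ℝ)) with hA_def
  clear_value A
  have hA0 : 0 ≤ A := by rw [hA_def]; exact Real.sqrt_nonneg _
  -- bound on the i-sqrt
  have h1 : Real.sqrt (2 * η * Li / (T i:ℝ)) ≤ Real.sqrt c * A := by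
    rw [hA_def, ← Real.sqrt_mul hc0.le]
    apply Real.sqrt_le_sqrt
    rw [mul_div_assoc', div_le_div_iff₀ hTi0 hTj0]
    have e1 : 2 * η * Li * (T j:ℝ) ≤ 2 * η * Lj * (T j:ℝ) := by
      have := mul_le_mul_of_nonneg_right (mul_le_mul_of_nonneg_left hLij (by linarith : (0:ℝ) ≤ 2 * η)) hTj0.le
      linarith
    have e2 : 2 * η * Lj * (T j:ℝ) ≤ 2 * η * Lj * (c * (T i:ℝ)) := by
      have := mul_le_mul_of_nonneg_left hTc (by positivity : (0:ℝ) ≤ 2 * η * Lj)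
      linarith
    calc 2 * η * Li * (T j:ℝ) ≤ 2 * η * Lj * (c * (T i:ℝ)) := le_trans e1 e2
      _ = c * (2 * η * Lj) * (T i:ℝ) := by ring
  -- bound on the confidence term for j
  have h2 : Real.sqrt (2 * η₁ * Mj / (T j:ℝ)) ≤ Real.sqrt (η₁ / η) * A := by
    rw [hA_def, ← Real.sqrt_mul (by positivity)]
    apply Real.sqrt_le_sqrt
    rw [show η₁ / η * (2 * η * Lj / (T j:ℝ)) = 2 * η₁ * Lj / (T j:ℝ) by field_simp]
    gcongr
  -- gap bound
  have h3 : μ 1 - μ j ≤ Real.sqrt c * A := by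
    by_cases hz : μ 1 - μ j = 0
    · rw [hz]; positivity
    · have hΔj0 : 0 ≤ μ 1 - μ j := by
        have := hμ 1 j le_rfl hj1 hjK
        linarith
      have hΔj := hTcΔ hz
      have hsq : (μ 1 - μ j)^2 ≤ c / (T j:ℝ) := by
        have hp : 0 < (μ 1 - μ j)^2 := by positivity
        rw [le_div_iff₀ hTj0]
        have h := mul_le_mul_of_nonneg_right hΔj hp.le
        rw [mul_assoc, inv_mul_cancel₀ (ne_of_gt hp), mul_one] at h
        linarith
      have h21 : (1:ℝ) ≤ 2 * η * Lj := by
        rw [show 2 * η * Lj = 2 * (η * Lj) by ring]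
        have h := mul_le_mul hη.le hLj1 zero_le_one (by linarith : (0:ℝ) ≤ η)
        linarith
      have hle : c / (T j:ℝ) ≤ c * (2 * η * Lj / (T j:ℝ)) := by
        rw [div_eq_mul_one_div c]
        refine mul_le_mul_of_nonneg_left ?_ hc0.le
        rw [div_le_div_iff₀ hTj0 hTj0]
        have := mul_le_mul_of_nonneg_right h21 hTj0.le
        linarith
      calc μ 1 - μ j ≤ Real.sqrt ((μ 1 - μ j)^2) := by rw [Real.sqrt_sq hΔj0]
        _ ≤ Real.sqrt (c * (2 * η * Lj / (T j:ℝ))) := Real.sqrt_le_sqrt (le_trans hsq hle)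
        _ = Real.sqrt c * A := by rw [hA_def]; exact Real.sqrt_mul hc0.le _
  have hcoef : Real.sqrt (η₁ / η) + 2 * Real.sqrt c ≤ 1 := by
    simp only [hs_def] at hcs ⊢
    linarith
  have hfin : Real.sqrt (η₁ / η) * A + 2 * (Real.sqrt c * A) ≤ A := by
    linarith [mul_le_mul_of_nonneg_right hcoef hA0]
  unfold gammaIdx
  rw [← hLi_def, ← hLj_def, ← hA_def]
  linarith [h1, h2, h3, hxj, hxi, hΔi, hfin]
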